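/- The type defect of a finite simple graph is at least the sum of the type defects of its connected components. Consequently, td(G|_W) ≥ 0 for all induced subgraphs G|_W of a graph G if and only if this holds for all W for which G|_W is connected. -/

import Mathlib

/-- Number of connected components of a graph. -/
noncomputable def numC {V : Type} (G : SimpleGraph V) : ℕ := Nat.card G.ConnectedComponent

/-- The (modified) type of a finite simple graph `G` with `n` vertices and `e` edges:
`type(G) = e - n + C(G) + Σ_v (C(G - v) - 1)`. -/
noncomputable def gtype {V : Type} (G : SimpleGraph V) : ℤ :=
  (Nat.card G.edgeSet : ℤ) - Nat.card V + numC G +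
    ∑ᶠ v : V, ((numC (G.induce {v}ᶜ) : ℤ) - 1)

/-- The type defect of a finite simple graph: `td(G) = type(G) - (n - 2)`. -/
noncomputable def td {V : Type} (G : SimpleGraph V) : ℤ :=
  gtype G - ((Nat.card V : ℤ) - 2)

open SimpleGraph
variable {V : Type} {W : Type}

def AdjClosed (G : SimpleGraph V) (S : Set V) : Prop :=
  ∀ ⦃u v : V⦄, G.Adj u v → u ∈ S → v ∈ S

lemma AdjClosed.compl {G : SimpleGraph V} {S : Set V} (hS : AdjClosed G S) :
    AdjClosed G Sᶜ := fun u v h hu hv => hu (hS h.symm hv)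

lemma AdjClosed.mem_of_walk {G : SimpleGraph V} {S : Set V} (hS : AdjClosed G S)
    {u v : V} (p : G.Walk u v) (hu : u ∈ S) : v ∈ S := by
  induction p with
  | nil => exact hu
  | cons h _ ih => exact ih (hS h hu)

lemma AdjClosed.reachable_induce {G : SimpleGraph V} {S : Set V} (hS : AdjClosed G S)
    {u v : V} (p : G.Walk u v) (hu : u ∈ S) (hv : v ∈ S) :
    (G.induce S).Reachable ⟨u, hu⟩ ⟨v, hv⟩ := by
  induction p with
  | nil => rfl
  | @cons a b c h p ih =>
      have hb : b ∈ S := hS h hu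
      exact (Reachable.trans (Adj.reachable (by exact h : (G.induce S).Adj ⟨a, hu⟩ ⟨b, hb⟩))
        (ih hb hv))

open Classical in
noncomputable def ccSplit {G : SimpleGraph V} {S : Set V} (hS : AdjClosed G S) :
    G.ConnectedComponent ≃
      (G.induce S).ConnectedComponent ⊕ (G.induce Sᶜ).ConnectedComponent where
  toFun := ConnectedComponent.lift
    (fun v => if hv : v ∈ S then Sum.inl ((G.induce S).connectedComponentMk ⟨v, hv⟩)
      else Sum.inr ((G.induce Sᶜ).connectedComponentMk ⟨v, hv⟩))
    (by
      intro v w p _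
      by_cases hv : v ∈ S
      · have hw : w ∈ S := hS.mem_of_walk p hv
        simp only [dif_pos hv, dif_pos hw]
        exact congrArg _ (ConnectedComponent.sound (hS.reachable_induce p hv hw))
      · have hw : w ∈ Sᶜ := hS.compl.mem_of_walk p hv
        simp only [dif_neg hv, dif_neg hw]
        exact congrArg _ (ConnectedComponent.sound (hS.compl.reachable_induce p hv hw)))
  invFun := Sum.elim
    (ConnectedComponent.map (SimpleGraph.Embedding.induce S).toHom)
    (ConnectedComponent.map (SimpleGraph.Embedding.induce Sᶜ).toHom)
  left_inv := by
    apply ConnectedComponent.ind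
    intro v
    by_cases hv : v ∈ S <;>
      simp [ConnectedComponent.lift_mk, hv, ConnectedComponent.map_mk]
  right_inv := by
    rintro (c | c)
    · induction c using ConnectedComponent.ind with
      | _ x =>
        obtain ⟨v, hv⟩ := x
        simp [ConnectedComponent.map_mk, ConnectedComponent.lift_mk, hv]
    · induction c using ConnectedComponent.ind with
      | _ x =>
        obtain ⟨v, hv⟩ := x
        show ConnectedComponent.lift _ _ (G.connectedComponentMk v) = _
        rw [ConnectedComponent.lift_mk, dif_neg (by exact hv)]

lemma numC_split [Finite V] {G : SimpleGraph V} {S : Set V} (hS : AdjClosed G S) :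
    numC G = numC (G.induce S) + numC (G.induce Sᶜ) := by
  rw [numC, Nat.card_congr (ccSplit hS), Nat.card_sum]; rfl

lemma numC_congr {G : SimpleGraph V} {G' : SimpleGraph W} (e : G ≃g G') :
    numC G = numC G' :=
  Nat.card_congr e.connectedComponentEquiv

lemma supp_adjClosed {G : SimpleGraph V} (c : G.ConnectedComponent) :
    AdjClosed G c.supp := by
  intro u v h hu
  rw [ConnectedComponent.mem_supp_iff] at hu ⊢
  rw [← hu]
  exact (ConnectedComponent.connectedComponentMk_eq_of_adj h).symm

lemma connected_induce_supp {G : SimpleGraph V} (c : G.ConnectedComponent) :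
    (G.induce c.supp).Connected := by
  obtain ⟨v, hv⟩ := c.exists_rep
  rw [connected_iff]
  refine ⟨?_, ?_⟩
  · rintro ⟨u, hu⟩ ⟨w, hw⟩
    have : G.Reachable u w := by
      rw [ConnectedComponent.mem_supp_iff] at hu hw
      exact ConnectedComponent.exact (hu.trans hw.symm)
    exact this.elim fun p => (supp_adjClosed c).reachable_induce p hu hw
  · exact ⟨⟨v, by rw [ConnectedComponent.mem_supp_iff]; exact hv⟩⟩

lemma numC_connected {G : SimpleGraph V} (h : G.Connected) : numC G = 1 := by
  rw [numC, Nat.card_eq_one_iff_unique]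
  constructor
  · constructor
    intro a b
    induction a using ConnectedComponent.ind with
    | _ u =>
      induction b using ConnectedComponent.ind with
      | _ v => exact ConnectedComponent.sound (h.preconnected u v)
  · exact ⟨G.connectedComponentMk h.nonempty.some⟩

lemma numC_supp_eq_one {G : SimpleGraph V} (c : G.ConnectedComponent) :
    numC (G.induce c.supp) = 1 := numC_connected (connected_induce_supp c)

noncomputable def induceInduceIso (G : SimpleGraph V) (S : Set V) (T : Set S) :
    (G.induce S).induce T ≃g G.induce (Subtype.val '' T) where
  toEquiv := Equiv.Set.image Subtype.val T Subtype.val_injective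
  map_rel_iff' := by
    intro a b
    simp [Equiv.Set.image, Equiv.Set.imageOfInjOn, comap_adj]

noncomputable def isoInduce {G : SimpleGraph V} {G' : SimpleGraph W} (e : G ≃g G') (S : Set V) :
    G.induce S ≃g G'.induce (⇑e '' S) where
  toEquiv := e.toEquiv.image S
  map_rel_iff' := by
    intro a b
    simp only [Equiv.image, comap_adj, Function.Embedding.coe_subtype]
    exact e.map_rel_iff

lemma sum_fiberwise_supp [Fintype V] (G : SimpleGraph V)
    [Fintype G.ConnectedComponent] [∀ c : G.ConnectedComponent, Fintype c.supp]
    {M : Type} [AddCommMonoid M] (f : V → M) :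
    ∑ c : G.ConnectedComponent, ∑ v : c.supp, f v = ∑ v, f v := by
  classical
  have := Fintype.sum_fiberwise (G.connectedComponentMk) f
  rw [← this]
  apply Finset.sum_congr rfl
  intro c _
  apply Finset.sum_equiv (Equiv.subtypeEquivRight (fun v => Iff.rfl)) (by intro i; simp only [Finset.mem_univ, true_iff]; exact @Finset.mem_univ _ (Subtype.fintype _) _) (by simp)

lemma card_supp_sum [Fintype V] (G : SimpleGraph V)
    [Fintype G.ConnectedComponent] :
    ∑ c : G.ConnectedComponent, (Nat.card c.supp) = Nat.card V := by
  classical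
  have := sum_fiberwise_supp G (fun _ : V => (1 : ℕ))
  simpa [Finset.card_univ, Nat.card_eq_fintype_card] using this

def dartFiberEquiv (G : SimpleGraph V) (c : G.ConnectedComponent) :
    {d : G.Dart // G.connectedComponentMk d.fst = c} ≃ (G.induce c.supp).Dart where
  toFun d := ⟨(⟨d.1.fst, d.2⟩, ⟨d.1.snd, by
      have h2 := d.2
      rw [ConnectedComponent.mem_supp_iff]
      exact (ConnectedComponent.connectedComponentMk_eq_of_adj d.1.adj).symm.trans h2⟩), d.1.adj⟩
  invFun d := ⟨⟨(d.fst.val, d.snd.val), d.adj⟩, d.fst.prop⟩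
  left_inv d := by ext <;> rfl
  right_inv d := by ext <;> rfl

lemma nat_card_dart [Fintype V] (G : SimpleGraph V) :
    Nat.card G.Dart = 2 * Nat.card G.edgeSet := by
  classical
  rw [Nat.card_eq_fintype_card, Nat.card_eq_fintype_card,
    G.dart_card_eq_twice_card_edges, SimpleGraph.edgeFinset, Set.toFinset_card]

lemma card_edge_sum [Fintype V] (G : SimpleGraph V) [Fintype G.ConnectedComponent] :
    ∑ c : G.ConnectedComponent, (Nat.card (G.induce c.supp).edgeSet) =
      Nat.card G.edgeSet := by
  classical
  apply Nat.eq_of_mul_eq_mul_left (show 0 < 2 by norm_num)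
  rw [← nat_card_dart, Finset.mul_sum]
  have h1 : Nat.card G.Dart =
      Nat.card (Σ c : G.ConnectedComponent, {d : G.Dart // G.connectedComponentMk d.fst = c}) :=
    Nat.card_congr (Equiv.sigmaFiberEquiv (fun d : G.Dart => G.connectedComponentMk d.fst)).symm
  rw [h1]
  letI : ∀ c : G.ConnectedComponent, Fintype {d : G.Dart // G.connectedComponentMk d.fst = c} :=
    fun c => Fintype.ofFinite _
  rw [Nat.card_eq_fintype_card, Fintype.card_sigma]
  apply Finset.sum_congr rfl
  intro c _
  rw [← Nat.card_eq_fintype_card, Nat.card_congr (dartFiberEquiv G c), nat_card_dart]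

lemma numC_deleteVertex [Fintype V] (G : SimpleGraph V) (v : V) :
    numC (G.induce ({v}ᶜ : Set V)) + 1 =
      numC (G.induce ((G.connectedComponentMk v).supp \ {v})) + numC G := by
  classical
  set c := G.connectedComponentMk v with hc
  have h1 : numC G = numC (G.induce c.supp) + numC (G.induce c.suppᶜ) :=
    numC_split (supp_adjClosed c)
  set H := G.induce ({v}ᶜ : Set V) with hH
  set S : Set ({v}ᶜ : Set V) := Subtype.val ⁻¹' c.supp with hSdef
  have hS : AdjClosed H S := by
    intro a b hab ha
    have hadj : G.Adj a.val b.val := hab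
    simp only [hSdef, Set.mem_preimage, ConnectedComponent.mem_supp_iff] at ha ⊢
    exact (ConnectedComponent.connectedComponentMk_eq_of_adj hadj).symm.trans ha
  have h2 : numC H = numC (H.induce S) + numC (H.induce Sᶜ) := numC_split hS
  have im1 : Subtype.val '' S = c.supp \ {v} := by
    rw [hSdef, Set.image_preimage_eq_inter_range, Subtype.range_coe_subtype,
      Set.diff_eq]
    rfl
  have im2 : Subtype.val '' Sᶜ = c.suppᶜ := by
    rw [hSdef, ← Set.preimage_compl, Set.image_preimage_eq_inter_range,
      Subtype.range_coe_subtype]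
    have hsub : c.suppᶜ ⊆ {x | x ∈ ({v}ᶜ : Set V)} := by
      intro x hx
      simp only [Set.mem_setOf_eq, Set.mem_compl_iff, Set.mem_singleton_iff]
      rintro rfl
      exact hx (by rw [ConnectedComponent.mem_supp_iff])
    exact Set.inter_eq_self_of_subset_left hsub
  have e1 : numC (H.induce S) = numC (G.induce (c.supp \ {v})) := by
    rw [numC_congr (induceInduceIso G _ S), im1]
  have e2 : numC (H.induce Sᶜ) = numC (G.induce c.suppᶜ) := by
    rw [numC_congr (induceInduceIso G _ Sᶜ), im2]
  have h3 : numC (G.induce c.supp) = 1 := numC_supp_eq_one c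
  omega

lemma image_compl_singleton {S : Set V} (w : S) :
    Subtype.val '' ({w}ᶜ : Set S) = S \ {w.val} := by
  ext x
  simp only [Set.mem_image, Set.mem_compl_iff, Set.mem_singleton_iff, Set.mem_diff]
  constructor
  · rintro ⟨y, hy, rfl⟩
    exact ⟨y.prop, fun h => hy (Subtype.ext h)⟩
  · rintro ⟨hx, hne⟩
    exact ⟨⟨x, hx⟩, fun h => hne (congrArg Subtype.val h), rfl⟩

lemma td_expand [Fintype V] (G : SimpleGraph V) :
    td G = (Nat.card G.edgeSet : ℤ)
      + (∑ v : V, (numC (G.induce ((G.connectedComponentMk v).supp \ {v})) : ℤ))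
      + (Nat.card V : ℤ) * ((numC G : ℤ) - 2) - 2 * (Nat.card V : ℤ) + (numC G : ℤ) + 2 := by
  classical
  rw [td, gtype, finsum_eq_sum_of_fintype]
  have h : ∀ v : V, ((numC (G.induce ({v}ᶜ : Set V)) : ℤ) - 1)
      = (numC (G.induce ((G.connectedComponentMk v).supp \ {v})) : ℤ) + ((numC G : ℤ) - 2) := by
    intro v
    have h0 := numC_deleteVertex G v
    have h1 : ((numC (G.induce ({v}ᶜ : Set V)) : ℤ) + 1)
        = (numC (G.induce ((G.connectedComponentMk v).supp \ {v})) : ℤ) + (numC G : ℤ) := by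
      exact_mod_cast congrArg (Nat.cast : ℕ → ℤ) h0
    linarith
  rw [Finset.sum_congr rfl (fun v _ => h v), Finset.sum_add_distrib, Finset.sum_const,
    Finset.card_univ]
  push_cast [Nat.card_eq_fintype_card]
  ring

lemma td_supp_expand [Fintype V] (G : SimpleGraph V)
    [∀ c : G.ConnectedComponent, Fintype c.supp] (c : G.ConnectedComponent) :
    td (G.induce c.supp) = (Nat.card (G.induce c.supp).edgeSet : ℤ)
      + (∑ w : c.supp, (numC (G.induce (c.supp \ {w.val})) : ℤ))
      - 3 * (Nat.card c.supp : ℤ) + 3 := by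
  classical
  rw [td, gtype, finsum_eq_sum_of_fintype, numC_supp_eq_one]
  have h : ∀ w : (c.supp : Set V), ((numC ((G.induce c.supp).induce ({w}ᶜ : Set c.supp)) : ℤ) - 1)
      = (numC (G.induce (c.supp \ {w.val})) : ℤ) - 1 := by
    intro w
    have : numC ((G.induce c.supp).induce ({w}ᶜ : Set c.supp))
        = numC (G.induce (c.supp \ {w.val})) := by
      rw [numC_congr (induceInduceIso G c.supp ({w}ᶜ)), image_compl_singleton]
    rw [this]
  rw [Finset.sum_congr rfl (fun w _ => h w), Finset.sum_sub_distrib, Finset.sum_const,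
    Finset.card_univ]
  push_cast [Nat.card_eq_fintype_card]
  ring

lemma td_sum_le [Fintype V] (G : SimpleGraph V) :
    (∑ᶠ c : G.ConnectedComponent, td (G.induce c.supp)) ≤ td G := by
  classical
  letI : Fintype G.ConnectedComponent := Fintype.ofFinite _
  letI : ∀ c : G.ConnectedComponent, Fintype c.supp := fun _ => Fintype.ofFinite _
  rw [finsum_eq_sum_of_fintype]
  have hsupp : ∀ c : G.ConnectedComponent,
      (∑ w : (c.supp : Set V), (numC (G.induce (c.supp \ {w.val})) : ℤ))
      = ∑ w : (c.supp : Set V),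
          (numC (G.induce ((G.connectedComponentMk w.val).supp \ {w.val})) : ℤ) := by
    intro c
    apply Finset.sum_congr rfl
    intro w _
    have hw : G.connectedComponentMk w.val = c := w.prop
    rw [hw]
  have hsum : (∑ c : G.ConnectedComponent, td (G.induce c.supp))
      = (Nat.card G.edgeSet : ℤ)
        + (∑ v : V, (numC (G.induce ((G.connectedComponentMk v).supp \ {v})) : ℤ))
        - 3 * (Nat.card V : ℤ) + 3 * (numC G : ℤ) := by
    have : ∀ c : G.ConnectedComponent, td (G.induce c.supp)
        = (Nat.card (G.induce c.supp).edgeSet : ℤ)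
          + (∑ w : (c.supp : Set V),
              (numC (G.induce ((G.connectedComponentMk w.val).supp \ {w.val})) : ℤ))
          - 3 * (Nat.card c.supp : ℤ) + 3 := by
      intro c
      rw [td_supp_expand, hsupp]
    rw [Finset.sum_congr rfl (fun c _ => this c)]
    have he : (∑ c : G.ConnectedComponent, (Nat.card (G.induce c.supp).edgeSet : ℤ))
        = (Nat.card G.edgeSet : ℤ) := by
      exact_mod_cast congrArg (Nat.cast : ℕ → ℤ) (card_edge_sum G)
    have hn : (∑ c : G.ConnectedComponent, (Nat.card c.supp : ℤ))
        = (Nat.card V : ℤ) := by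
      exact_mod_cast congrArg (Nat.cast : ℕ → ℤ) (card_supp_sum G)
    have hF : (∑ c : G.ConnectedComponent, ∑ w : (c.supp : Set V),
          (numC (G.induce ((G.connectedComponentMk w.val).supp \ {w.val})) : ℤ))
        = ∑ v : V, (numC (G.induce ((G.connectedComponentMk v).supp \ {v})) : ℤ) :=
      sum_fiberwise_supp G
        (fun v => (numC (G.induce ((G.connectedComponentMk v).supp \ {v})) : ℤ))
    simp only [Finset.sum_add_distrib, Finset.sum_sub_distrib, ← Finset.mul_sum,
      Finset.sum_const, Finset.card_univ]
    rw [hF, he, hn]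
    have hnum : (numC G : ℤ) = (Fintype.card G.ConnectedComponent : ℤ) := by
      rw [numC, Nat.card_eq_fintype_card]
    rw [hnum]
    push_cast [Nat.card_eq_fintype_card]
    ring
  rw [hsum, td_expand]
  have hkn : numC G ≤ Nat.card V :=
    Nat.card_le_card_of_surjective G.connectedComponentMk Quot.mk_surjective
  by_cases hV : Nonempty V
  · haveI : Nonempty G.ConnectedComponent := ⟨G.connectedComponentMk hV.some⟩
    have hk1 : 1 ≤ (numC G : ℤ) := by
      have : 0 < numC G := by rw [numC]; exact Nat.card_pos
      exact_mod_cast this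
    have hk_le' : (numC G : ℤ) ≤ (Nat.card V : ℤ) := by exact_mod_cast hkn
    nlinarith [sq_nonneg ((numC G : ℤ) - 1)]
  · have h0 : Nat.card V = 0 := by
      rw [not_nonempty_iff] at hV
      simp [Nat.card_eq_zero]
    have h1 : numC G = 0 := by
      rw [not_nonempty_iff] at hV
      haveI : IsEmpty G.ConnectedComponent := by
        constructor; intro c; exact c.ind (fun v => hV.false v)
      rw [numC]
      simp
    rw [h0, h1]
    norm_num

lemma numC_compl_congr {G : SimpleGraph V} {G' : SimpleGraph W} (e : G ≃g G') (v : V) :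
    numC (G.induce ({v}ᶜ : Set V)) = numC (G'.induce ({e v}ᶜ : Set W)) := by
  have h := numC_congr (isoInduce e ({v}ᶜ : Set V))
  have him : ⇑e '' ({v}ᶜ : Set V) = ({e v}ᶜ : Set W) := by
    rw [show (⇑e : V → W) = ⇑e.toEquiv from rfl, Set.image_compl_eq e.toEquiv.bijective,
      Set.image_singleton]
  rwa [him] at h

lemma td_congr [Finite V] {G : SimpleGraph V} {G' : SimpleGraph W} (e : G ≃g G') :
    td G = td G' := by
  haveI : Finite W := Finite.of_equiv V e.toEquiv
  letI : Fintype V := Fintype.ofFinite V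
  letI : Fintype W := Fintype.ofFinite W
  rw [td, td, gtype, gtype, finsum_eq_sum_of_fintype, finsum_eq_sum_of_fintype,
    Nat.card_congr e.toEquiv, Nat.card_congr e.mapEdgeSet, numC_congr e]
  have hsum : (∑ i : V, ((numC (G.induce ({i}ᶜ : Set V)) : ℤ) - 1))
      = ∑ i : V, ((numC (G'.induce ({e.toEquiv i}ᶜ : Set W)) : ℤ) - 1) := by
    apply Finset.sum_congr rfl
    intro v _
    have h2 := numC_compl_congr e v
    simp only [h2]
    rfl
  rw [hsum, Equiv.sum_comp e.toEquiv (fun w => ((numC (G'.induce ({w}ᶜ : Set W)) : ℤ) - 1))]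

/-- The type defect of a finite simple graph is at least the sum of the type defects of
its connected components; consequently `td(G|_W) ≥ 0` for all induced subgraphs iff it
holds for all connected induced subgraphs. -/
theorem td_ge_sum_components {V : Type} [Fintype V] (G : SimpleGraph V) :
    (∑ᶠ c : G.ConnectedComponent, td (G.induce c.supp)) ≤ td G ∧
      ((∀ W : Finset V, 0 ≤ td (G.induce (W : Set V))) ↔
        ∀ W : Finset V, (G.induce (W : Set V)).Connected →
          0 ≤ td (G.induce (W : Set V))) := by
  classical
  refine ⟨td_sum_le G, ⟨fun h W _ => h W, fun h W => ?_⟩⟩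
  set H := G.induce (W : Set V) with hH
  have h1 := td_sum_le H
  have h2 : ∀ c : H.ConnectedComponent, 0 ≤ td (H.induce c.supp) := by
    intro c
    have hiso := induceInduceIso G (W : Set V) c.supp
    set S : Set V := Subtype.val '' c.supp with hS
    have hfin : S.Finite := Set.toFinite S
    have hcoe : (hfin.toFinset : Set V) = S := hfin.coe_toFinset
    have hconn : (G.induce ((hfin.toFinset : Finset V) : Set V)).Connected := by
      rw [hcoe]
      exact hiso.connected_iff.mp (connected_induce_supp c)
    have h4 := h hfin.toFinset hconn
    rw [hcoe] at h4
    calc (0:ℤ) ≤ td (G.induce S) := h4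
      _ = td (H.induce c.supp) := (td_congr hiso).symm
  exact le_trans (finsum_nonneg h2) h1
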